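/- Let p ≥ 2 be an integer and κ ≥ 1 a real number. Let S be a symmetric positive definite p×p real matrix with spectral decomposition S = U · diag(λ̂₁,…,λ̂_p) · Uᵀ, where U is orthogonal and λ̂₁ ≥ ⋯ ≥ λ̂_p > 0, and assume λ̂₁ > κ·λ̂_p. Then there exist integers α, β with 1 ≤ α < β ≤ p such that, setting μ* := (κ·Σ_{i=1}^{α} λ̂ᵢ + Σ_{i=β}^{p} λ̂ᵢ) / (α·κ² + p − β + 1) and Λ* := diag(λ*₁,…,λ*_p) with λ*ᵢ = κ·μ* for 1 ≤ i ≤ α, λ*ᵢ = λ̂ᵢ for α < i < β, and λ*ᵢ = μ* for β ≤ i ≤ p, the matrix Σ̂ := U Λ* Uᵀ belongs to F(κ) and minimizes ‖Σ − S‖_F over all Σ ∈ F(κ). -/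

import Mathlib

open Matrix

/-- The largest eigenvalue of a (symmetric) real matrix, as the supremum of its spectrum. -/
noncomputable def lamMax {p : ℕ} (A : Matrix (Fin p) (Fin p) ℝ) : ℝ := sSup (spectrum ℝ A)

/-- The smallest eigenvalue of a (symmetric) real matrix, as the infimum of its spectrum. -/
noncomputable def lamMin {p : ℕ} (A : Matrix (Fin p) (Fin p) ℝ) : ℝ := sInf (spectrum ℝ A)

/-- The Frobenius norm of a real matrix. -/
noncomputable def frobNorm {p : ℕ} (A : Matrix (Fin p) (Fin p) ℝ) : ℝ :=
  Real.sqrt (∑ i, ∑ j, (A i j) ^ 2)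

section Helpers

variable {p : ℕ}

lemma frobSq_eq_trace (A : Matrix (Fin p) (Fin p) ℝ) :
    (∑ i, ∑ j, (A i j) ^ 2) = Matrix.trace (Aᵀ * A) := by
  rw [Matrix.trace, Finset.sum_comm]
  refine Finset.sum_congr rfl fun j _ => ?_
  simp [Matrix.diag, Matrix.mul_apply, sq]

lemma frobSq_conj (U A : Matrix (Fin p) (Fin p) ℝ) (hU' : U * Uᵀ = 1) :
    (∑ i, ∑ j, ((Uᵀ * A * U) i j) ^ 2) = ∑ i, ∑ j, (A i j) ^ 2 := by
  rw [frobSq_eq_trace, frobSq_eq_trace]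
  have key : (Uᵀ * A * U)ᵀ * (Uᵀ * A * U) = Uᵀ * (Aᵀ * A) * U := by
    simp only [Matrix.transpose_mul, Matrix.transpose_transpose]
    calc Uᵀ * (Aᵀ * U) * (Uᵀ * A * U) = Uᵀ * Aᵀ * (U * Uᵀ) * (A * U) := by noncomm_ring
      _ = Uᵀ * (Aᵀ * A) * U := by rw [hU']; noncomm_ring
  rw [key, Matrix.trace_mul_comm (Uᵀ * (Aᵀ * A)) U, ← Matrix.mul_assoc, hU', Matrix.one_mul]

lemma frobSq_diagonal (v : Fin p → ℝ) :
    (∑ i, ∑ j, ((Matrix.diagonal v) i j) ^ 2) = ∑ i, (v i) ^ 2 := by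
  refine Finset.sum_congr rfl fun i _ => ?_
  rw [Finset.sum_eq_single i]
  · simp [Matrix.diagonal_apply_eq]
  · intro j _ hji
    simp [Matrix.diagonal_apply_ne' v hji]
  · simp

lemma spec_herm {M : Matrix (Fin p) (Fin p) ℝ} (hM : M.IsHermitian) :
    spectrum ℝ M = Set.range hM.eigenvalues := by
  conv_lhs => rw [hM.spectral_theorem]
  rw [Unitary.conjStarAlgAut_apply, Unitary.spectrum_star_right_conjugate]
  simp [spectrum_diagonal]

lemma posSemidef_sub_smul {M : Matrix (Fin p) (Fin p) ℝ} (hM : M.IsHermitian) {c : ℝ}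
    (h : ∀ i, c ≤ hM.eigenvalues i) : (M - c • 1).PosSemidef := by
  have hd : (Matrix.diagonal (RCLike.ofReal ∘ hM.eigenvalues) - c • (1 : Matrix (Fin p) (Fin p) ℝ)).PosSemidef := by
    rw [Matrix.smul_one_eq_diagonal]
    simp only [Matrix.diagonal_sub]
    exact Matrix.posSemidef_diagonal_iff.mpr fun i => by simpa using sub_nonneg.mpr (h i)
  have h2 := hd.mul_mul_conjTranspose_same (hM.eigenvectorUnitary : Matrix (Fin p) (Fin p) ℝ)
  have hmu : (hM.eigenvectorUnitary : Matrix (Fin p) (Fin p) ℝ) * star (hM.eigenvectorUnitary : Matrix (Fin p) (Fin p) ℝ) = 1 :=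
    Unitary.mul_star_self_of_mem hM.eigenvectorUnitary.2
  have key : (hM.eigenvectorUnitary : Matrix (Fin p) (Fin p) ℝ) *
      (Matrix.diagonal (RCLike.ofReal ∘ hM.eigenvalues) - c • 1) *
      (hM.eigenvectorUnitary : Matrix (Fin p) (Fin p) ℝ)ᴴ = M - c • 1 := by
    rw [Matrix.mul_sub, Matrix.sub_mul, ← Matrix.star_eq_conjTranspose, ← show M = (hM.eigenvectorUnitary : Matrix (Fin p) (Fin p) ℝ) * Matrix.diagonal (RCLike.ofReal ∘ hM.eigenvalues) * star (hM.eigenvectorUnitary : Matrix (Fin p) (Fin p) ℝ) from by simpa only [Unitary.conjStarAlgAut_apply, Unitary.coe_star] using hM.spectral_theorem]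
    congr 1
    rw [mul_smul_comm, Matrix.mul_one, smul_mul_assoc, hmu]
  rwa [key] at h2

lemma posSemidef_smul_sub {M : Matrix (Fin p) (Fin p) ℝ} (hM : M.IsHermitian) {c : ℝ}
    (h : ∀ i, hM.eigenvalues i ≤ c) : (c • 1 - M).PosSemidef := by
  have hd : (c • (1 : Matrix (Fin p) (Fin p) ℝ) - Matrix.diagonal (RCLike.ofReal ∘ hM.eigenvalues)).PosSemidef := by
    rw [Matrix.smul_one_eq_diagonal]
    simp only [Matrix.diagonal_sub]
    exact Matrix.posSemidef_diagonal_iff.mpr fun i => by simpa using sub_nonneg.mpr (h i)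
  have h2 := hd.mul_mul_conjTranspose_same (hM.eigenvectorUnitary : Matrix (Fin p) (Fin p) ℝ)
  have hmu : (hM.eigenvectorUnitary : Matrix (Fin p) (Fin p) ℝ) * star (hM.eigenvectorUnitary : Matrix (Fin p) (Fin p) ℝ) = 1 :=
    Unitary.mul_star_self_of_mem hM.eigenvectorUnitary.2
  have key : (hM.eigenvectorUnitary : Matrix (Fin p) (Fin p) ℝ) *
      (c • 1 - Matrix.diagonal (RCLike.ofReal ∘ hM.eigenvalues)) *
      (hM.eigenvectorUnitary : Matrix (Fin p) (Fin p) ℝ)ᴴ = c • 1 - M := by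
    rw [Matrix.mul_sub, Matrix.sub_mul, ← Matrix.star_eq_conjTranspose, ← show M = (hM.eigenvectorUnitary : Matrix (Fin p) (Fin p) ℝ) * Matrix.diagonal (RCLike.ofReal ∘ hM.eigenvalues) * star (hM.eigenvectorUnitary : Matrix (Fin p) (Fin p) ℝ) from by simpa only [Unitary.conjStarAlgAut_apply, Unitary.coe_star] using hM.spectral_theorem]
    congr 1
    rw [mul_smul_comm, Matrix.mul_one, smul_mul_assoc, hmu]
  rwa [key] at h2

lemma diag_nonneg_of_posSemidef {K : Matrix (Fin p) (Fin p) ℝ} (hK : K.PosSemidef) (i : Fin p) :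
    0 ≤ K i i := by
  have := hK.dotProduct_mulVec_nonneg (Pi.single i 1)
  simpa [dotProduct, Matrix.mulVec, Pi.single_apply] using this

lemma spec_conj (U D : Matrix (Fin p) (Fin p) ℝ) (hU : Uᵀ * U = 1) (hU' : U * Uᵀ = 1) :
    spectrum ℝ (U * D * Uᵀ) = spectrum ℝ D := by
  let u : (Matrix (Fin p) (Fin p) ℝ)ˣ := ⟨U, Uᵀ, hU', hU⟩
  exact spectrum.units_conjugate (u := u)

lemma posDef_conj {U D : Matrix (Fin p) (Fin p) ℝ} (hU' : U * Uᵀ = 1)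
    (hD : D.PosDef) : (U * D * Uᵀ).PosDef := by
  refine Matrix.posDef_iff_dotProduct_mulVec.mpr ⟨?_, ?_⟩
  · have hDh : Dᵀ = D := by
      have := hD.isHermitian
      rwa [Matrix.IsHermitian, Matrix.conjTranspose_eq_transpose_of_trivial] at this
    rw [Matrix.IsHermitian, Matrix.conjTranspose_eq_transpose_of_trivial]
    rw [Matrix.transpose_mul, Matrix.transpose_mul, Matrix.transpose_transpose, hDh,
      Matrix.mul_assoc]
  · intro x hx
    have hw : Uᵀ *ᵥ x ≠ 0 := by
      intro h0
      apply hx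
      have : (U * Uᵀ) *ᵥ x = U *ᵥ (Uᵀ *ᵥ x) := by rw [Matrix.mulVec_mulVec]
      rw [hU', Matrix.one_mulVec, h0, Matrix.mulVec_zero] at this
      exact this
    have := hD.dotProduct_mulVec_pos hw
    convert this using 1
    simp only [star_trivial]
    rw [show (U * D * Uᵀ) *ᵥ x = U *ᵥ (D *ᵥ (Uᵀ *ᵥ x)) by rw [Matrix.mulVec_mulVec, Matrix.mulVec_mulVec]]
    rw [dotProduct_mulVec x U]
    congr 1
    ext j; simp [Matrix.vecMul, Matrix.mulVec, dotProduct, Matrix.transpose_apply, mul_comm]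

lemma lowerset_card_char (s : Finset (Fin p))
    (hs : ∀ i j : Fin p, i ≤ j → j ∈ s → i ∈ s) (i : Fin p) :
    i ∈ s ↔ (i : ℕ) < s.card := by
  constructor
  · intro hi
    have hsub : Finset.Iic i ⊆ s := fun j hj => hs j i (Finset.mem_Iic.mp hj) hi
    have := Finset.card_le_card hsub
    rw [Fin.card_Iic] at this
    omega
  · intro hi
    by_contra hns
    have hsub : s ⊆ Finset.Iio i := by
      intro j hj
      rw [Finset.mem_Iio]
      by_contra hji
      exact hns (hs i j (le_of_not_gt hji) hj)
    have := Finset.card_le_card hsub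
    rw [Fin.card_Iio] at this
    omega

lemma upperset_card_char (s : Finset (Fin p))
    (hs : ∀ i j : Fin p, i ≤ j → i ∈ s → j ∈ s) (i : Fin p) :
    i ∈ s ↔ p - s.card ≤ (i : ℕ) := by
  have := lowerset_card_char sᶜ (fun a b hab hb => by
    simp only [Finset.mem_compl] at *
    exact fun ha => hb (hs a b hab ha)) i
  rw [Finset.mem_compl] at this
  have hcard : sᶜ.card = p - s.card := by
    rw [Finset.card_compl]; simp
  rw [hcard] at this
  have hc : s.card ≤ p := le_trans (Finset.card_le_card (Finset.subset_univ s)) (by simp)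
  have hip := i.2
  constructor
  · intro hi
    by_contra hlt
    exact (this.mpr (by omega)) hi
  · intro hi
    by_contra hns
    have := this.mp hns
    omega

end Helpers

set_option maxHeartbeats 1000000 in
theorem stmt3 {p : ℕ} (hp : 2 ≤ p) (κ : ℝ) (hκ : 1 ≤ κ)
    (S U : Matrix (Fin p) (Fin p) ℝ) (lamhat : Fin p → ℝ)
    (hSpd : S.PosDef)
    (hU : Uᵀ * U = 1)
    (hS : S = U * Matrix.diagonal lamhat * Uᵀ)
    -- λ̂₁ ≥ ⋯ ≥ λ̂_p > 0 (0-indexed, so that `lamhat i` is λ̂_{i+1}):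
    (hanti : ∀ i j : Fin p, i ≤ j → lamhat j ≤ lamhat i)
    (hpos : ∀ i : Fin p, 0 < lamhat i)
    -- λ̂₁ > κ·λ̂_p:
    (hcond : lamhat ⟨0, by omega⟩ > κ * lamhat ⟨p - 1, by omega⟩) :
    ∃ α β : ℕ, 1 ≤ α ∧ α < β ∧ β ≤ p ∧
      ∀ (μstar : ℝ) (lamstar : Fin p → ℝ) (Sighat : Matrix (Fin p) (Fin p) ℝ),
        μstar = (κ * (∑ i ∈ Finset.univ.filter (fun i : Fin p => (i : ℕ) + 1 ≤ α), lamhat i)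
            + ∑ i ∈ Finset.univ.filter (fun i : Fin p => β ≤ (i : ℕ) + 1 ∧ (i : ℕ) + 1 ≤ p),
                lamhat i) /
          ((α : ℝ) * κ ^ 2 + (p : ℝ) - (β : ℝ) + 1) →
        lamstar = (fun i : Fin p =>
          if (i : ℕ) + 1 ≤ α then κ * μstar
          else if (i : ℕ) + 1 < β then lamhat i
          else μstar) →
        Sighat = U * Matrix.diagonal lamstar * Uᵀ →
        Sighat.PosDef ∧ lamMax Sighat ≤ κ * lamMin Sighat ∧
          ∀ M : Matrix (Fin p) (Fin p) ℝ, M.PosDef → lamMax M ≤ κ * lamMin M →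
            frobNorm (Sighat - S) ≤ frobNorm (M - S) := by
  classical
  have hκ0 : (0:ℝ) < κ := lt_of_lt_of_le one_pos hκ
  set i0 : Fin p := ⟨0, by omega⟩ with hi0
  set ip : Fin p := ⟨p - 1, by omega⟩ with hip
  set lo := lamhat ip with hlo_def
  set hi := lamhat i0 with hhi_def
  have hlo_pos : 0 < lo := hpos ip
  have hlo_le : ∀ i, lo ≤ lamhat i := fun i => hanti i ip (by
    simp [Fin.le_def, hip]; omega)
  have hle_hi : ∀ i, lamhat i ≤ hi := fun i => hanti i0 i (by
    simp [Fin.le_def, hi0])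
  have hlohi : lo ≤ hi := hlo_le i0
  -- the piecewise-linear KKT function
  set f : ℝ → ℝ := fun t =>
    (∑ i, max (t - lamhat i) 0) - κ * ∑ i, max (lamhat i - κ * t) 0 with hf_def
  have hfc : Continuous f := by
    apply Continuous.sub
    · exact continuous_finset_sum _ fun i _ =>
        ((continuous_id.sub continuous_const).max continuous_const)
    · exact continuous_const.mul (continuous_finset_sum _ fun i _ =>
        ((continuous_const.sub (continuous_const.mul continuous_id)).max continuous_const))
  have hflo : f lo < 0 := by
    have h1 : (∑ i, max (lo - lamhat i) 0) = 0 := by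
      refine Finset.sum_eq_zero fun i _ => ?_
      exact max_eq_right (by linarith [hlo_le i])
    have h2 : (0:ℝ) < ∑ i, max (lamhat i - κ * lo) 0 := by
      have hterm : (0:ℝ) < max (lamhat i0 - κ * lo) 0 :=
        lt_max_of_lt_left (by rw [hhi_def] at *; linarith [hcond])
      refine lt_of_lt_of_le hterm ?_
      exact Finset.single_le_sum (f := fun i => max (lamhat i - κ * lo) 0) (fun i _ => le_max_right _ _) (Finset.mem_univ i0)
    simp only [hf_def, h1]
    nlinarith
  have hfhi : 0 < f hi := by
    have h2 : (∑ i, max (lamhat i - κ * hi) 0) = 0 := by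
      refine Finset.sum_eq_zero fun i _ => ?_
      refine max_eq_right ?_
      have := hle_hi i
      nlinarith [hpos i0]
    have h1 : (0:ℝ) < ∑ i, max (hi - lamhat i) 0 := by
      have hterm : (0:ℝ) < max (hi - lamhat ip) 0 := by
        refine lt_max_of_lt_left ?_
        have : κ * lo ≥ lo := by nlinarith
        rw [hhi_def, hlo_def] at *
        linarith [hcond]
      refine lt_of_lt_of_le hterm ?_
      exact Finset.single_le_sum (f := fun i => max (hi - lamhat i) 0) (fun i _ => le_max_right _ _) (Finset.mem_univ ip)
    simp only [hf_def, h2]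
    linarith
  obtain ⟨μ, hμmem, hμ0⟩ : ∃ μ ∈ Set.Icc lo hi, f μ = 0 := by
    have := intermediate_value_Icc hlohi hfc.continuousOn
    have h0mem : (0:ℝ) ∈ Set.Icc (f lo) (f hi) := ⟨le_of_lt hflo, le_of_lt hfhi⟩
    obtain ⟨μ, hμ, hfμ⟩ := this h0mem
    exact ⟨μ, hμ, hfμ⟩
  have hμpos : 0 < μ := lt_of_lt_of_le hlo_pos hμmem.1
  have hμκ : μ ≤ κ * μ := by nlinarith
  -- the top and bottom index sets
  set A : Finset (Fin p) := Finset.univ.filter (fun i => κ * μ < lamhat i) with hA_def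
  set B : Finset (Fin p) := Finset.univ.filter (fun i => lamhat i ≤ μ) with hB_def
  set α := A.card with hα_def
  set βm := B.card with hβm_def
  have hAmem : ∀ i : Fin p, κ * μ < lamhat i ↔ (i : ℕ) < α := by
    intro i
    rw [show (κ * μ < lamhat i ↔ i ∈ A) from by simp [hA_def]]
    exact lowerset_card_char A (fun a b hab hb => by
      simp only [hA_def, Finset.mem_filter, Finset.mem_univ, true_and] at *
      exact lt_of_lt_of_le hb (hanti a b hab)) i
  have hBmem : ∀ i : Fin p, lamhat i ≤ μ ↔ p - βm ≤ (i : ℕ) := by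
    intro i
    rw [show (lamhat i ≤ μ ↔ i ∈ B) from by simp [hB_def]]
    exact upperset_card_char B (fun a b hab ha => by
      simp only [hB_def, Finset.mem_filter, Finset.mem_univ, true_and] at *
      exact le_trans (hanti a b hab) ha) i
  -- rewrite f μ = 0 as filtered sums
  have hmax1 : (∑ i, max (μ - lamhat i) 0) = ∑ i ∈ B, (μ - lamhat i) := by
    rw [hB_def, Finset.sum_filter]
    refine Finset.sum_congr rfl fun i _ => ?_
    by_cases h : lamhat i ≤ μ
    · simp [h, max_eq_left (by linarith : (0:ℝ) ≤ μ - lamhat i)]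
    · simp [h, max_eq_right (by push_neg at h; linarith : μ - lamhat i ≤ 0)]
  have hmax2 : (∑ i, max (lamhat i - κ * μ) 0) = ∑ i ∈ A, (lamhat i - κ * μ) := by
    rw [hA_def, Finset.sum_filter]
    refine Finset.sum_congr rfl fun i _ => ?_
    by_cases h : κ * μ < lamhat i
    · simp [h, max_eq_left (by linarith : (0:ℝ) ≤ lamhat i - κ * μ)]
    · simp [h, max_eq_right (by push_neg at h; linarith : lamhat i - κ * μ ≤ 0)]
  have hkey : κ * (∑ i ∈ A, (lamhat i - κ * μ)) = ∑ i ∈ B, (μ - lamhat i) := by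
    have := hμ0
    simp only [hf_def] at this
    rw [hmax1, hmax2] at this
    linarith
  -- α ≥ 1
  have hα1 : 1 ≤ α := by
    by_contra h
    have hAe : A = ∅ := Finset.card_eq_zero.mp (by omega)
    have hz : ∑ i ∈ B, (μ - lamhat i) = 0 := by rw [← hkey, hAe]; simp
    have hall : ∀ i ∈ B, μ - lamhat i = 0 := by
      intro i hiB
      refine Finset.sum_eq_zero_iff_of_nonneg (fun j hj => ?_) |>.mp hz i hiB
      simp only [hB_def, Finset.mem_filter] at hj
      linarith [hj.2]
    have hmu_le : ∀ i, μ ≤ lamhat i := by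
      intro i
      by_cases hiB : i ∈ B
      · linarith [hall i hiB]
      · simp only [hB_def, Finset.mem_filter, Finset.mem_univ, true_and, not_le] at hiB
        linarith
    have hμlo : μ = lo := le_antisymm (hmu_le ip) hμmem.1
    have hi0A : i0 ∈ A := by
      simp only [hA_def, Finset.mem_filter, Finset.mem_univ, true_and]
      rw [hμlo]
      exact hcond
    rw [hAe] at hi0A
    exact absurd hi0A (Finset.notMem_empty _)
  -- βm ≥ 1
  have hβm1 : 1 ≤ βm := by
    by_contra h
    have hBe : B = ∅ := Finset.card_eq_zero.mp (by omega)
    have hz : κ * ∑ i ∈ A, (lamhat i - κ * μ) = 0 := by rw [hkey, hBe]; simp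
    have hz2 : ∑ i ∈ A, (lamhat i - κ * μ) = 0 := by
      rcases mul_eq_zero.mp hz with h' | h'
      · linarith
      · exact h'
    have hAe : A = ∅ := by
      rw [Finset.eq_empty_iff_forall_notMem]
      intro i hiA
      have hiA' := hiA
      simp only [hA_def, Finset.mem_filter, Finset.mem_univ, true_and] at hiA'
      have := Finset.sum_eq_zero_iff_of_nonneg (fun j hj => by
        simp only [hA_def, Finset.mem_filter, Finset.mem_univ, true_and] at hj
        linarith : ∀ j ∈ A, (0:ℝ) ≤ lamhat j - κ * μ) |>.mp hz2 i hiA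
      linarith
    have hub : lamhat i0 ≤ κ * μ := by
      by_contra h'
      have : i0 ∈ A := by
        simp only [hA_def, Finset.mem_filter, Finset.mem_univ, true_and]
        push_neg at h'
        exact h'
      rw [hAe] at this
      exact absurd this (Finset.notMem_empty _)
    have hlb : μ < lamhat ip := by
      by_contra h'
      have : ip ∈ B := by
        simp only [hB_def, Finset.mem_filter, Finset.mem_univ, true_and]
        push_neg at h'
        exact h'
      rw [hBe] at this
      exact absurd this (Finset.notMem_empty _)
    have := hcond
    nlinarith
  -- disjointness
  have hαβ : α + βm ≤ p := by
    have hdisj : Disjoint A B := by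
      rw [Finset.disjoint_left]
      intro i hiA hiB
      simp only [hA_def, Finset.mem_filter, Finset.mem_univ, true_and] at hiA
      simp only [hB_def, Finset.mem_filter, Finset.mem_univ, true_and] at hiB
      linarith
    calc α + βm = (A ∪ B).card := (Finset.card_union_of_disjoint hdisj).symm
      _ ≤ (Finset.univ : Finset (Fin p)).card := Finset.card_le_card (Finset.subset_univ _)
      _ = p := by simp
  refine ⟨α, p - βm + 1, hα1, by omega, by omega, ?_⟩
  intro μstar lamstar Sighat hμstar hlamstar hSighat
  have hfA : Finset.univ.filter (fun i : Fin p => (i : ℕ) + 1 ≤ α) = A := by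
    ext i
    simp only [Finset.mem_filter, Finset.mem_univ, true_and]
    rw [show (i ∈ A ↔ κ * μ < lamhat i) from by simp [hA_def], hAmem i]
    omega
  have hfB : Finset.univ.filter
      (fun i : Fin p => p - βm + 1 ≤ (i : ℕ) + 1 ∧ (i : ℕ) + 1 ≤ p) = B := by
    ext i
    simp only [Finset.mem_filter, Finset.mem_univ, true_and]
    rw [show (i ∈ B ↔ lamhat i ≤ μ) from by simp [hB_def], hBmem i]
    have := i.2
    omega
  have e1 : ∑ i ∈ A, (lamhat i - κ * μ) = (∑ i ∈ A, lamhat i) - (α : ℝ) * (κ * μ) := by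
    rw [Finset.sum_sub_distrib, Finset.sum_const, nsmul_eq_mul, hα_def]
  have e2 : ∑ i ∈ B, (μ - lamhat i) = (βm : ℝ) * μ - ∑ i ∈ B, lamhat i := by
    rw [Finset.sum_sub_distrib, Finset.sum_const, nsmul_eq_mul, hβm_def]
  have hsum : κ * (∑ i ∈ A, lamhat i) + ∑ i ∈ B, lamhat i
      = μ * ((α : ℝ) * κ ^ 2 + (βm : ℝ)) := by
    rw [e1, e2] at hkey
    linear_combination hkey
  have hdpos : (0:ℝ) < (α : ℝ) * κ ^ 2 + (βm : ℝ) := by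
    have h1 : (1:ℝ) ≤ (α : ℝ) := by exact_mod_cast hα1
    have h2 : (0:ℝ) ≤ (βm : ℝ) := Nat.cast_nonneg _
    nlinarith
  have hdenom : (α : ℝ) * κ ^ 2 + (p : ℝ) - ((p - βm + 1 : ℕ) : ℝ) + 1
      = (α : ℝ) * κ ^ 2 + (βm : ℝ) := by
    have hc : ((p - βm + 1 : ℕ) : ℝ) = (p : ℝ) - (βm : ℝ) + 1 := by
      rw [Nat.cast_add, Nat.cast_sub (by omega : βm ≤ p)]
      norm_num
    rw [hc]; ring
  have hμeq : μstar = μ := by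
    rw [hμstar, hfA, hfB, hdenom, hsum]
    exact mul_div_cancel_right₀ μ (ne_of_gt hdpos)
  rw [hμeq] at hlamstar
  -- bounds on lamstar
  have hxval : ∀ i : Fin p, lamstar i =
      (if (i : ℕ) + 1 ≤ α then κ * μ else if (i : ℕ) + 1 < p - βm + 1 then lamhat i else μ) := by
    intro i; rw [hlamstar]
  have hxlb : ∀ i : Fin p, μ ≤ lamstar i := by
    intro i
    rw [hxval i]
    by_cases h1 : (i : ℕ) + 1 ≤ α
    · simp only [h1, if_true]; linarith
    · simp only [h1, if_false]
      by_cases h2 : (i : ℕ) + 1 < p - βm + 1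
      · simp only [h2, if_true]
        have : ¬ (p - βm ≤ (i : ℕ)) := by omega
        have := (not_iff_not.mpr (hBmem i)).mpr this
        push_neg at this
        linarith
      · simp [h2]
  have hxub : ∀ i : Fin p, lamstar i ≤ κ * μ := by
    intro i
    rw [hxval i]
    by_cases h1 : (i : ℕ) + 1 ≤ α
    · simp [h1]
    · simp only [h1, if_false]
      by_cases h2 : (i : ℕ) + 1 < p - βm + 1
      · simp only [h2, if_true]
        have : ¬ ((i : ℕ) < α) := by omega
        have := (not_iff_not.mpr (hAmem i)).mpr this
        push_neg at this
        linarith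
      · simp only [h2, if_false]; linarith
  have hU' : U * Uᵀ = 1 := mul_eq_one_comm.mp hU
  have hxpos : ∀ i : Fin p, 0 < lamstar i := fun i => lt_of_lt_of_le hμpos (hxlb i)
  have hSigPD : Sighat.PosDef := by
    rw [hSighat]
    exact posDef_conj hU' (Matrix.posDef_diagonal_iff.mpr hxpos)
  have hspecS : spectrum ℝ Sighat = Set.range lamstar := by
    rw [hSighat, spec_conj U _ hU hU', spectrum_diagonal]
  have hcondS : lamMax Sighat ≤ κ * lamMin Sighat := by
    have hmax : lamMax Sighat ≤ κ * μ := by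
      rw [lamMax, hspecS]
      refine Real.sSup_le ?_ (by positivity)
      rintro x ⟨i, rfl⟩
      exact hxub i
    have hmin : μ ≤ lamMin Sighat := by
      rw [lamMin, hspecS]
      refine le_csInf ⟨lamstar i0, ⟨i0, rfl⟩⟩ ?_
      rintro x ⟨i, rfl⟩
      exact hxlb i
    calc lamMax Sighat ≤ κ * μ := hmax
      _ ≤ κ * lamMin Sighat := mul_le_mul_of_nonneg_left hmin (le_of_lt hκ0)
  refine ⟨hSigPD, hcondS, ?_⟩
  intro M hMpd hMcond
  have hH : M.IsHermitian := hMpd.isHermitian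
  have hspecM : spectrum ℝ M = Set.range hH.eigenvalues := spec_herm hH
  set m := lamMin M with hm_def
  have hrne : (Set.range hH.eigenvalues).Nonempty := ⟨hH.eigenvalues i0, ⟨i0, rfl⟩⟩
  have hm_mem : m ∈ Set.range hH.eigenvalues := by
    rw [hm_def, lamMin, hspecM]
    exact hrne.csInf_mem (Set.finite_range _)
  have hm_le : ∀ i, m ≤ hH.eigenvalues i := by
    intro i
    rw [hm_def, lamMin, hspecM]
    exact csInf_le ((Set.finite_range _).bddBelow) ⟨i, rfl⟩
  have hub' : ∀ i, hH.eigenvalues i ≤ lamMax M := by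
    intro i
    rw [lamMax, hspecM]
    exact le_csSup ((Set.finite_range _).bddAbove) ⟨i, rfl⟩
  have hmpos : 0 < m := by
    obtain ⟨i, hi⟩ := hm_mem
    rw [← hi]
    exact hMpd.eigenvalues_pos i
  have hev_ub : ∀ i, hH.eigenvalues i ≤ κ * m := fun i => le_trans (hub' i) hMcond
  set N := Uᵀ * M * U with hN_def
  have hUH : Uᴴ = Uᵀ := Matrix.conjTranspose_eq_transpose_of_trivial U
  have hNlb : ∀ i, m ≤ N i i := by
    intro i
    have h1 := (posSemidef_sub_smul hH hm_le).conjTranspose_mul_mul_same U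
    rw [hUH] at h1
    have hexp : Uᵀ * (M - m • 1) * U = N - m • 1 := by
      rw [Matrix.mul_sub, Matrix.sub_mul, hN_def]
      congr 1
      rw [mul_smul_comm, Matrix.mul_one, smul_mul_assoc, hU]
    rw [hexp] at h1
    have h0 := diag_nonneg_of_posSemidef h1 i
    have : (N - m • 1) i i = N i i - m := by
      simp [Matrix.sub_apply, Matrix.smul_apply, Matrix.one_apply_eq]
    rw [this] at h0
    linarith
  have hNub : ∀ i, N i i ≤ κ * m := by
    intro i
    have h1 := (posSemidef_smul_sub hH hev_ub).conjTranspose_mul_mul_same U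
    rw [hUH] at h1
    have hexp : Uᵀ * ((κ * m) • 1 - M) * U = (κ * m) • 1 - N := by
      rw [Matrix.mul_sub, Matrix.sub_mul, hN_def]
      congr 1
      rw [mul_smul_comm, Matrix.mul_one, smul_mul_assoc, hU]
    rw [hexp] at h1
    have h0 := diag_nonneg_of_posSemidef h1 i
    have : ((κ * m) • 1 - N) i i = κ * m - N i i := by
      simp [Matrix.sub_apply, Matrix.smul_apply, Matrix.one_apply_eq]
    rw [this] at h0
    linarith
  have hUSU : Uᵀ * S * U = Matrix.diagonal lamhat := by
    rw [hS]
    calc Uᵀ * (U * Matrix.diagonal lamhat * Uᵀ) * U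
        = (Uᵀ * U) * Matrix.diagonal lamhat * (Uᵀ * U) := by noncomm_ring
      _ = Matrix.diagonal lamhat := by rw [hU, Matrix.one_mul, Matrix.mul_one]
  have hUSigU : Uᵀ * Sighat * U = Matrix.diagonal lamstar := by
    rw [hSighat]
    calc Uᵀ * (U * Matrix.diagonal lamstar * Uᵀ) * U
        = (Uᵀ * U) * Matrix.diagonal lamstar * (Uᵀ * U) := by noncomm_ring
      _ = Matrix.diagonal lamstar := by rw [hU, Matrix.one_mul, Matrix.mul_one]
  have hdiff1 : Uᵀ * (Sighat - S) * U = Matrix.diagonal (fun i => lamstar i - lamhat i) := by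
    rw [Matrix.mul_sub, Matrix.sub_mul, hUSigU, hUSU, Matrix.diagonal_sub]
  have efrob1 : ∑ i, ∑ j, ((Sighat - S) i j)^2 = ∑ i, (lamstar i - lamhat i)^2 := by
    rw [← frobSq_conj U (Sighat - S) hU', hdiff1, frobSq_diagonal]
  have hdiff2 : Uᵀ * (M - S) * U = N - Matrix.diagonal lamhat := by
    rw [Matrix.mul_sub, Matrix.sub_mul, hUSU, hN_def]
  have efrob2 : ∑ i, ∑ j, ((M - S) i j)^2 = ∑ i, ∑ j, ((N - Matrix.diagonal lamhat) i j)^2 := by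
    rw [← frobSq_conj U (M - S) hU', hdiff2]
  have elower : ∑ i, (N i i - lamhat i)^2 ≤ ∑ i, ∑ j, ((N - Matrix.diagonal lamhat) i j)^2 := by
    refine Finset.sum_le_sum fun i _ => ?_
    have hstep := Finset.single_le_sum (f := fun j => ((N - Matrix.diagonal lamhat) i j)^2)
      (fun j _ => sq_nonneg _) (Finset.mem_univ i)
    have hdi : (N - Matrix.diagonal lamhat) i i = N i i - lamhat i := by
      simp [Matrix.sub_apply, Matrix.diagonal_apply_eq]
    simpa only [hdi] using hstep
  -- the KKT cross term
  have cross : 0 ≤ ∑ i, (lamstar i - lamhat i) * (N i i - lamstar i) := by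
    set hfun : Fin p → ℝ := fun i =>
      (if κ * μ < lamhat i then κ * (κ * μ - lamhat i) else 0) +
      (if lamhat i ≤ μ then μ - lamhat i else 0) with hh_def
    have p1 : (∑ i, if κ * μ < lamhat i then κ * (κ * μ - lamhat i) else 0)
        = ∑ i ∈ A, κ * (κ * μ - lamhat i) := by
      rw [hA_def, Finset.sum_filter]
    have q1 : ∑ i ∈ A, κ * (κ * μ - lamhat i)
        = κ * ((α : ℝ) * (κ * μ) - ∑ i ∈ A, lamhat i) := by
      rw [← Finset.mul_sum]
      congr 1
      rw [Finset.sum_sub_distrib, Finset.sum_const, nsmul_eq_mul, hα_def]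
    have p2 : (∑ i, if lamhat i ≤ μ then μ - lamhat i else 0)
        = ∑ i ∈ B, (μ - lamhat i) := by
      rw [hB_def, Finset.sum_filter]
    have hsum_h : ∑ i, hfun i = 0 := by
      rw [hh_def]
      rw [Finset.sum_add_distrib, p1, q1, p2, e2]
      linear_combination -hsum
    have hterm : ∀ i : Fin p, hfun i * (m - μ) ≤ (lamstar i - lamhat i) * (N i i - lamstar i) := by
      intro i
      rw [hxval i, hh_def]
      by_cases h1 : (i : ℕ) + 1 ≤ α
      · have hd : κ * μ < lamhat i := (hAmem i).mpr (by omega)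
        have hd2 : ¬ (lamhat i ≤ μ) := by push_neg; linarith
        simp only [h1, if_true, hd, if_true, hd2, if_false, add_zero]
        have hN1 := hNub i
        nlinarith [mul_nonneg (sub_nonneg.mpr (le_of_lt hd)) (sub_nonneg.mpr hN1)]
      · by_cases h2 : (i : ℕ) + 1 < p - βm + 1
        · have hnd : ¬ (κ * μ < lamhat i) := by
            have h3 : ¬ ((i : ℕ) < α) := by omega
            exact (not_iff_not.mpr (hAmem i)).mpr h3
          have hnd2 : ¬ (lamhat i ≤ μ) := by
            have h3 : ¬ (p - βm ≤ (i : ℕ)) := by omega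
            exact (not_iff_not.mpr (hBmem i)).mpr h3
          simp [h1, h2, hnd, hnd2]
        · have hd : lamhat i ≤ μ := (hBmem i).mpr (by omega)
          have hnd : ¬ (κ * μ < lamhat i) := by push_neg; linarith
          simp only [h1, if_false, h2, if_false, hnd, hd, if_true, zero_add]
          have hN1 := hNlb i
          nlinarith [mul_nonneg (sub_nonneg.mpr hd) (sub_nonneg.mpr hN1)]
    calc (0:ℝ) = (∑ i, hfun i) * (m - μ) := by rw [hsum_h]; ring
      _ = ∑ i, hfun i * (m - μ) := by rw [Finset.sum_mul]
      _ ≤ ∑ i, (lamstar i - lamhat i) * (N i i - lamstar i) :=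
          Finset.sum_le_sum fun i _ => hterm i
  have core : ∑ i, (lamstar i - lamhat i)^2 ≤ ∑ i, (N i i - lamhat i)^2 := by
    have hexpand : ∑ i, (N i i - lamhat i)^2
        = ∑ i, ((N i i - lamstar i)^2
          + 2 * ((lamstar i - lamhat i) * (N i i - lamstar i))
          + (lamstar i - lamhat i)^2) :=
      Finset.sum_congr rfl fun i _ => by ring
    rw [hexpand, Finset.sum_add_distrib, Finset.sum_add_distrib, ← Finset.mul_sum]
    have h1 : 0 ≤ ∑ i, (N i i - lamstar i)^2 := Finset.sum_nonneg fun i _ => sq_nonneg _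
    have h2 : 0 ≤ 2 * ∑ i, (lamstar i - lamhat i) * (N i i - lamstar i) := by linarith
    linarith
  rw [frobNorm, frobNorm]
  apply Real.sqrt_le_sqrt
  rw [efrob1, efrob2]
  exact le_trans core elower
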